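/- arXiv:2304.14257 — 2 statements merged into one kernel-verified Lean document; each statement's English description precedes it below -/
import Mathlib

section
/- Under the assumptions of the elliptic wellposedness lemma, the solution operator S_o is Lipschitz in its second argument: there exists a constant C_o* (depending on Ω, κ, ‖w₀‖_{H²}) such that for all w₁, w₂ ∈ B_r(w₀) and v ∈ H⁻¹(Ω), ‖S_o(v, w₁) − S_o(v, w₂)‖_{H¹(Ω)} ≤ C_o* ‖v‖_{H⁻¹(Ω)} ‖w₁ − w₂‖_{H²(Ω)}. -/
open MeasureTheory RealInnerProductSpace

private lemma aux_cube_diff {a b dd M : ℝ} (ha0 : 0 ≤ a) (haM : a ≤ M)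
    (hb0 : 0 ≤ b) (hbM : b ≤ M) (hd : |a - b| ≤ dd) :
    |a ^ 3 - b ^ 3| ≤ 3 * M ^ 2 * dd := by
  have hfac : a ^ 3 - b ^ 3 = (a - b) * (a ^ 2 + a * b + b ^ 2) := by ring
  have hdd : 0 ≤ dd := (abs_nonneg _).trans hd
  have h2 : |a ^ 2 + a * b + b ^ 2| ≤ 3 * M ^ 2 := by
    rw [abs_of_nonneg (by positivity)]
    nlinarith
  calc |a ^ 3 - b ^ 3| = |a - b| * |a ^ 2 + a * b + b ^ 2| := by rw [hfac, abs_mul]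
    _ ≤ dd * (3 * M ^ 2) := mul_le_mul hd h2 (abs_nonneg _) hdd
    _ = 3 * M ^ 2 * dd := by ring

private lemma aux_le_of_sq {x K : ℝ} (hx : 0 ≤ x) (hK : 0 ≤ K) (h : x ^ 2 ≤ K * x) : x ≤ K := by
  rcases hx.eq_or_lt' with h0 | h0
  · linarith
  · nlinarith

private lemma aux_sqrt_le {x B : ℝ} (hx : 0 ≤ x) (hB : 0 ≤ B) (h : x ^ 2 ≤ B ^ 2) : x ≤ B := by
  nlinarith

private lemma aux_key {A E c : ℝ} (hA : 0 ≤ A) (hE : 0 ≤ E) (hc : 0 ≤ c)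
    (h : ∀ s : ℝ, 0 < s → E * s ≤ c / 2 * (A * s ^ 2 + E)) : E ≤ c ^ 2 * A := by
  have hq : ∀ s : ℝ, 0 ≤ c * A / 2 * (s * s) + (-E) * s + c * E / 2 := by
    intro s
    rcases le_or_gt s 0 with hs | hs
    · have h1 : 0 ≤ (-E) * s := mul_nonneg_of_nonpos_of_nonpos (by linarith : -E ≤ 0) hs
      have h2 : 0 ≤ c * A / 2 * (s * s) := mul_nonneg (by positivity) (mul_self_nonneg _)
      have h3 : 0 ≤ c * E / 2 := by positivity
      linarith
    · have := h s hs; nlinarith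
  have hd := discrim_le_zero hq
  rw [discrim] at hd
  rcases hE.eq_or_lt' with h0 | h0
  · nlinarith
  · nlinarith

private lemma aux_ptwise {g ip na nb h c δ κ s : ℝ} (hκ : 0 < κ) (hs : 0 < s)
    (hg : |g| ≤ δ) (hδc : 8 * δ = c * κ ^ 3) (hh : κ ^ 3 / 8 ≤ h)
    (hip : |ip| ≤ na * nb) (hna : 0 ≤ na) (hnb : 0 ≤ nb) :
    s * (g * ip) ≤ c * s ^ 2 / 2 * (h * na ^ 2) + c / 2 * (h * nb ^ 2) := by
  have hδ0 : 0 ≤ δ := (abs_nonneg g).trans hg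
  have hκ3 : 0 < κ ^ 3 := by positivity
  have hc0 : 0 ≤ c := by nlinarith
  have h1 : g * ip ≤ δ * (na * nb) := by
    calc g * ip ≤ |g * ip| := le_abs_self _
      _ = |g| * |ip| := abs_mul _ _
      _ ≤ δ * (na * nb) := mul_le_mul hg hip (abs_nonneg _) hδ0
  have h2 : s * (g * ip) ≤ s * (δ * (na * nb)) := mul_le_mul_of_nonneg_left h1 hs.le
  have hch : δ ≤ c * h := by nlinarith [mul_nonneg hc0 (sub_nonneg.mpr hh)]
  have h3 : s * (δ * (na * nb)) ≤ δ / 2 * (s ^ 2 * na ^ 2 + nb ^ 2) := by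
    nlinarith [mul_nonneg hδ0 (sq_nonneg (s * na - nb))]
  have h4 : δ / 2 * (s ^ 2 * na ^ 2 + nb ^ 2) ≤ c * s ^ 2 / 2 * (h * na ^ 2) + c / 2 * (h * nb ^ 2) := by
    have e1 : δ * (s ^ 2 * na ^ 2) ≤ (c * h) * (s ^ 2 * na ^ 2) :=
      mul_le_mul_of_nonneg_right hch (by positivity)
    have e2 : δ * nb ^ 2 ≤ (c * h) * nb ^ 2 := mul_le_mul_of_nonneg_right hch (sq_nonneg _)
    nlinarith [e1, e2]
  linarith

set_option maxHeartbeats 1000000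

/-- Lipschitz continuity of the elliptic solution operator `S_o(v, w)` in its second
argument: under the assumptions of the elliptic wellposedness lemma there exists a
constant `C_o*` (depending on `Ω`, `κ`, `‖w₀‖_{H²}`) such that for all
`w₁, w₂ ∈ B_r(w₀) ⊂ H²(Ω)` and `v ∈ H⁻¹(Ω)`,
`‖S_o(v,w₁) − S_o(v,w₂)‖_{H¹} ≤ C_o* ‖v‖_{H⁻¹} ‖w₁ − w₂‖_{H²}`.
`X` models `H¹₀(Ω)` with gradient `D`; `H2` models `H²(Ω)` with realization `R` and
`L^∞` embedding constant `CE`; `κ = inf w₀ > 0` and `r ∈ (0, κ/(2CE))`. -/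
theorem stmt5 {Ω : Type*} [MeasurableSpace Ω] (μ : Measure Ω)
    {F : Type*} [NormedAddCommGroup F] [InnerProductSpace ℝ F]
    {X : Type*} [NormedAddCommGroup X] [InnerProductSpace ℝ X] [CompleteSpace X]
    {H2 : Type*} [NormedAddCommGroup H2] [NormedSpace ℝ H2]
    (Tfun : X →ₗ[ℝ] Ω → ℝ) (D : X →ₗ[ℝ] Ω → F)
    (hnorm : ∀ u : X, ‖u‖ ^ 2 = ∫ x, (Tfun u x) ^ 2 ∂μ + ∫ x, ‖D u x‖ ^ 2 ∂μ)
    (CP : ℝ) (hCP : 0 < CP)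
    (hPoin : ∀ u : X, ∫ x, (Tfun u x) ^ 2 ∂μ ≤ CP ^ 2 * ∫ x, ‖D u x‖ ^ 2 ∂μ)
    (R : H2 →ₗ[ℝ] Ω → ℝ) (CE : ℝ) (hCE : 0 < CE)
    (hEmb : ∀ f : H2, ∀ x : Ω, |R f x| ≤ CE * ‖f‖)
    (w₀ : H2) (κ : ℝ) (hκ : 0 < κ) (hκinf : ∀ x : Ω, κ ≤ R w₀ x)
    (r : ℝ) (hr0 : 0 < r) (hr : r < κ / (2 * CE))
    (hInt : ∀ (w : H2) (u u' : X),
      Integrable (fun x => (R w x) ^ 3 * ⟪D u x, D u' x⟫) μ)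
    (S : (X →L[ℝ] ℝ) → H2 → X)
    (hS : ∀ (v : X →L[ℝ] ℝ) (w : H2), ‖w - w₀‖ ≤ r → ∀ φ : X,
      ∫ x, (R w x) ^ 3 * ⟪D (S v w) x, D φ x⟫ ∂μ = - v φ) :
    ∃ C_o' > 0, ∀ (v : X →L[ℝ] ℝ) (w₁ w₂ : H2),
      ‖w₁ - w₀‖ ≤ r → ‖w₂ - w₀‖ ≤ r →
      ‖S v w₁ - S v w₂‖ ≤ C_o' * ‖v‖ * ‖w₁ - w₂‖ := by
  have hκ3 : (0 : ℝ) < κ ^ 3 := by positivity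
  set M : ℝ := CE * ‖w₀‖ + κ / 2 with hMdef
  have hM : 0 < M := by
    have := mul_nonneg hCE.le (norm_nonneg w₀); rw [hMdef]; linarith
  set K₁ : ℝ := (1 + CP ^ 2) * (8 / κ ^ 3) with hK₁def
  have hK₁ : 0 < K₁ := by rw [hK₁def]; positivity
  set K₂ : ℝ := 24 * M ^ 2 * CE / κ ^ 3 with hK₂def
  have hK₂ : 0 < K₂ := by rw [hK₂def]; positivity
  set C2 : ℝ := K₁ ^ 2 * K₂ ^ 2 * (8 * M ^ 3 / κ ^ 3) with hC2def
  have hC2 : 0 < C2 := by rw [hC2def]; positivity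
  -- pointwise bounds on R w
  have hCEr : CE * r ≤ κ / 2 := by
    have h := (lt_div_iff₀ (by positivity : (0 : ℝ) < 2 * CE)).mp hr
    nlinarith
  have hlow : ∀ w : H2, ‖w - w₀‖ ≤ r → ∀ x, κ / 2 ≤ R w x := by
    intro w hw x
    have h1 := hEmb (w - w₀) x
    have h2 := hκinf x
    rw [map_sub] at h1
    have h3 : |R w x - R w₀ x| ≤ CE * r := by
      refine h1.trans ?_
      exact mul_le_mul_of_nonneg_left hw hCE.le
    have h4 := abs_le.mp h3
    linarith [h4.1, h4.2]
  have hupp : ∀ w : H2, ‖w - w₀‖ ≤ r → ∀ x, R w x ≤ M := by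
    intro w hw x
    have h1 := hEmb (w - w₀) x
    have h2 := hEmb w₀ x
    rw [map_sub] at h1
    have h3 : |R w x - R w₀ x| ≤ CE * r := by
      refine h1.trans ?_
      exact mul_le_mul_of_nonneg_left hw hCE.le
    have h4 := abs_le.mp h3
    have h5 := abs_le.mp h2
    rw [hMdef]; linarith [h4.1, h4.2, h5.1, h5.2]
  have hcube_low : ∀ w : H2, ‖w - w₀‖ ≤ r → ∀ x, κ ^ 3 / 8 ≤ (R w x) ^ 3 := by
    intro w hw x
    have h1 := hlow w hw x
    nlinarith [sq_nonneg (R w x + κ / 2), sq_nonneg (R w x - κ / 2)]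
  have hcube_upp : ∀ w : H2, ‖w - w₀‖ ≤ r → ∀ x, (R w x) ^ 3 ≤ M ^ 3 := by
    intro w hw x
    have h1 := hlow w hw x
    have h2 := hupp w hw x
    exact pow_le_pow_left₀ (by linarith) h2 3
  -- L² gradient bound via coercivity
  have hDle : ∀ (w : H2), ‖w - w₀‖ ≤ r → ∀ u : X,
      ∫ x, ‖D u x‖ ^ 2 ∂μ ≤ 8 / κ ^ 3 * ∫ x, (R w x) ^ 3 * ⟪D u x, D u x⟫ ∂μ := by
    intro w hw u
    have hg : Integrable (fun x => 8 / κ ^ 3 * ((R w x) ^ 3 * ⟪D u x, D u x⟫)) μ :=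
      (hInt w u u).const_mul _
    calc ∫ x, ‖D u x‖ ^ 2 ∂μ
        ≤ ∫ x, 8 / κ ^ 3 * ((R w x) ^ 3 * ⟪D u x, D u x⟫) ∂μ := by
          refine integral_mono_of_nonneg (Filter.Eventually.of_forall fun x => sq_nonneg _) hg
            (Filter.Eventually.of_forall fun x => ?_)
          have h1 := hcube_low w hw x
          have h2 : (1 : ℝ) ≤ 8 / κ ^ 3 * (R w x) ^ 3 := by
            rw [div_mul_eq_mul_div, le_div_iff₀ hκ3]; linarith
          calc ‖D u x‖ ^ 2 = 1 * ‖D u x‖ ^ 2 := (one_mul _).symm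
            _ ≤ 8 / κ ^ 3 * (R w x) ^ 3 * ‖D u x‖ ^ 2 :=
                mul_le_mul_of_nonneg_right h2 (sq_nonneg _)
            _ = 8 / κ ^ 3 * ((R w x) ^ 3 * ⟪D u x, D u x⟫) := by
                rw [real_inner_self_eq_norm_sq]; ring
      _ = 8 / κ ^ 3 * ∫ x, (R w x) ^ 3 * ⟪D u x, D u x⟫ ∂μ := integral_const_mul _ _
  have hnormle : ∀ u : X, ‖u‖ ^ 2 ≤ (1 + CP ^ 2) * ∫ x, ‖D u x‖ ^ 2 ∂μ := by
    intro u
    have h1 := hnorm u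
    have h2 := hPoin u
    nlinarith
  refine ⟨Real.sqrt C2, Real.sqrt_pos.mpr hC2, ?_⟩
  intro v w₁ w₂ hw₁ hw₂
  have hvu : ∀ u : X, -v u ≤ ‖v‖ * ‖u‖ := by
    intro u
    have h1 := v.le_opNorm u
    rw [Real.norm_eq_abs] at h1
    exact (neg_le_abs _).trans h1
  -- norm bound on a solution
  have hSb : ∀ w : H2, (hw : ‖w - w₀‖ ≤ r) → ‖S v w‖ ≤ K₁ * ‖v‖ := by
    intro w hw
    have hQ := hS v w hw (S v w)
    have h1 := hDle w hw (S v w)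
    have h2 := hnormle (S v w)
    rw [hQ] at h1
    have h3 := hvu (S v w)
    have h4 : ‖S v w‖ ^ 2 ≤ K₁ * ‖v‖ * ‖S v w‖ := by
      have h5 : ∫ x, ‖D (S v w) x‖ ^ 2 ∂μ ≤ 8 / κ ^ 3 * (‖v‖ * ‖S v w‖) :=
        h1.trans (mul_le_mul_of_nonneg_left h3 (by positivity))
      calc ‖S v w‖ ^ 2 ≤ (1 + CP ^ 2) * ∫ x, ‖D (S v w) x‖ ^ 2 ∂μ := h2
        _ ≤ (1 + CP ^ 2) * (8 / κ ^ 3 * (‖v‖ * ‖S v w‖)) :=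
            mul_le_mul_of_nonneg_left h5 (by positivity)
        _ = K₁ * ‖v‖ * ‖S v w‖ := by rw [hK₁def]; ring
    exact aux_le_of_sq (norm_nonneg _) (by positivity) h4
  set u₁ : X := S v w₁ with hu₁def
  set u₂ : X := S v w₂ with hu₂def
  set e : X := u₁ - u₂ with hedef
  have hDe : ∀ x, D e x = D u₁ x - D u₂ x := by
    intro x; rw [hedef, map_sub]; rfl
  set A : ℝ := ∫ x, (R w₁ x) ^ 3 * ⟪D u₂ x, D u₂ x⟫ ∂μ with hAdef
  set E : ℝ := ∫ x, (R w₁ x) ^ 3 * ⟪D e x, D e x⟫ ∂μ with hEdef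
  set Q : ℝ := ∫ x, (R w₂ x) ^ 3 * ⟪D u₂ x, D u₂ x⟫ ∂μ with hQdef
  have hA0 : 0 ≤ A := by
    rw [hAdef]
    refine integral_nonneg fun x => mul_nonneg ?_ real_inner_self_nonneg
    linarith [hcube_low w₁ hw₁ x, hκ3]
  have hE0 : 0 ≤ E := by
    rw [hEdef]
    refine integral_nonneg fun x => mul_nonneg ?_ real_inner_self_nonneg
    linarith [hcube_low w₁ hw₁ x, hκ3]
  -- Q = -v u₂ and bounds
  have hQeq : Q = -v u₂ := hS v w₂ hw₂ u₂
  have hu₂b : ‖u₂‖ ≤ K₁ * ‖v‖ := hSb w₂ hw₂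
  have hQb : Q ≤ K₁ * ‖v‖ ^ 2 := by
    rw [hQeq]
    calc -v u₂ ≤ ‖v‖ * ‖u₂‖ := hvu u₂
      _ ≤ ‖v‖ * (K₁ * ‖v‖) := mul_le_mul_of_nonneg_left hu₂b (norm_nonneg v)
      _ = K₁ * ‖v‖ ^ 2 := by ring
  -- A ≤ (8 M³/κ³) Q
  have hAb : A ≤ 8 * M ^ 3 / κ ^ 3 * Q := by
    rw [hAdef, hQdef, ← integral_const_mul]
    refine integral_mono (hInt w₁ u₂ u₂) ((hInt w₂ u₂ u₂).const_mul _) fun x => ?_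
    have h1 := hcube_upp w₁ hw₁ x
    have h2 := hcube_low w₂ hw₂ x
    have h3 : (R w₁ x) ^ 3 ≤ 8 * M ^ 3 / κ ^ 3 * (R w₂ x) ^ 3 := by
      rw [div_mul_eq_mul_div, le_div_iff₀ hκ3]
      calc (R w₁ x) ^ 3 * κ ^ 3 ≤ M ^ 3 * (8 * (R w₂ x) ^ 3) :=
            mul_le_mul h1 (by linarith) hκ3.le (pow_nonneg hM.le 3)
        _ = 8 * M ^ 3 * (R w₂ x) ^ 3 := by ring
    have h4 : (R w₁ x) ^ 3 * ⟪D u₂ x, D u₂ x⟫ ≤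
        8 * M ^ 3 / κ ^ 3 * (R w₂ x) ^ 3 * ⟪D u₂ x, D u₂ x⟫ :=
      mul_le_mul_of_nonneg_right h3 real_inner_self_nonneg
    calc (R w₁ x) ^ 3 * ⟪D u₂ x, D u₂ x⟫
        ≤ 8 * M ^ 3 / κ ^ 3 * (R w₂ x) ^ 3 * ⟪D u₂ x, D u₂ x⟫ := h4
      _ = 8 * M ^ 3 / κ ^ 3 * ((R w₂ x) ^ 3 * ⟪D u₂ x, D u₂ x⟫) := by ring
  -- difference equation
  have hEeq : E = ∫ x, ((R w₂ x) ^ 3 - (R w₁ x) ^ 3) * ⟪D u₂ x, D e x⟫ ∂μ := by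
    have h1 : ∫ x, (R w₁ x) ^ 3 * ⟪D u₁ x, D e x⟫ ∂μ = -v e := hS v w₁ hw₁ e
    have h2 : ∫ x, (R w₂ x) ^ 3 * ⟪D u₂ x, D e x⟫ ∂μ = -v e := hS v w₂ hw₂ e
    have hsplit : (fun x => (R w₁ x) ^ 3 * ⟪D e x, D e x⟫) =
        fun x => (R w₁ x) ^ 3 * ⟪D u₁ x, D e x⟫ - (R w₁ x) ^ 3 * ⟪D u₂ x, D e x⟫ := by
      funext x
      rw [hDe x, inner_sub_left]; ring
    have hsplit2 : (fun x => ((R w₂ x) ^ 3 - (R w₁ x) ^ 3) * ⟪D u₂ x, D e x⟫) =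
        fun x => (R w₂ x) ^ 3 * ⟪D u₂ x, D e x⟫ - (R w₁ x) ^ 3 * ⟪D u₂ x, D e x⟫ := by
      funext x; ring
    rw [hEdef, hsplit, integral_sub (hInt w₁ u₁ e) (hInt w₁ u₂ e), h1,
      hsplit2, integral_sub (hInt w₂ u₂ e) (hInt w₁ u₂ e), h2]
  -- the parametric estimate
  set c : ℝ := K₂ * ‖w₁ - w₂‖ with hcdef
  have hc0 : 0 ≤ c := by rw [hcdef]; positivity
  set δ : ℝ := 3 * M ^ 2 * (CE * ‖w₁ - w₂‖) with hδdef
  have hδc : 8 * δ = c * κ ^ 3 := by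
    rw [hδdef, hcdef, hK₂def]; field_simp; ring
  have hgd : ∀ x, |(R w₂ x) ^ 3 - (R w₁ x) ^ 3| ≤ δ := by
    intro x
    have h1 := hEmb (w₂ - w₁) x
    rw [map_sub] at h1
    have h2 : |R w₂ x - R w₁ x| ≤ CE * ‖w₁ - w₂‖ := by
      rw [norm_sub_rev w₁ w₂]
      exact h1
    have h3 := hlow w₁ hw₁ x
    have h4 := hlow w₂ hw₂ x
    rw [hδdef]
    exact aux_cube_diff (by linarith) (hupp w₂ hw₂ x) (by linarith) (hupp w₁ hw₁ x) h2
  have hEs : ∀ s : ℝ, 0 < s → E * s ≤ c / 2 * (A * s ^ 2 + E) := by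
    intro s hs
    have hintL : Integrable
        (fun x => s * (((R w₂ x) ^ 3 - (R w₁ x) ^ 3) * ⟪D u₂ x, D e x⟫)) μ := by
      have heqf : (fun x => s * (((R w₂ x) ^ 3 - (R w₁ x) ^ 3) * ⟪D u₂ x, D e x⟫)) =
          fun x => s * ((R w₂ x) ^ 3 * ⟪D u₂ x, D e x⟫) -
            s * ((R w₁ x) ^ 3 * ⟪D u₂ x, D e x⟫) := by
        funext x; ring
      rw [heqf]
      exact ((hInt w₂ u₂ e).const_mul s).sub ((hInt w₁ u₂ e).const_mul s)
    have hintR : Integrable (fun x =>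
        c * s ^ 2 / 2 * ((R w₁ x) ^ 3 * ⟪D u₂ x, D u₂ x⟫) +
        c / 2 * ((R w₁ x) ^ 3 * ⟪D e x, D e x⟫)) μ :=
      ((hInt w₁ u₂ u₂).const_mul _).add ((hInt w₁ e e).const_mul _)
    calc E * s = s * E := mul_comm _ _
      _ = ∫ x, s * (((R w₂ x) ^ 3 - (R w₁ x) ^ 3) * ⟪D u₂ x, D e x⟫) ∂μ := by
          rw [hEeq, ← integral_const_mul]
      _ ≤ ∫ x, (c * s ^ 2 / 2 * ((R w₁ x) ^ 3 * ⟪D u₂ x, D u₂ x⟫) +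
            c / 2 * ((R w₁ x) ^ 3 * ⟪D e x, D e x⟫)) ∂μ := by
          refine integral_mono hintL hintR fun x => ?_
          have hip : |⟪D u₂ x, D e x⟫| ≤ ‖D u₂ x‖ * ‖D e x‖ := abs_real_inner_le_norm _ _
          have := aux_ptwise (g := (R w₂ x) ^ 3 - (R w₁ x) ^ 3)
            (ip := ⟪D u₂ x, D e x⟫) (na := ‖D u₂ x‖) (nb := ‖D e x‖)
            (h := (R w₁ x) ^ 3) hκ hs (hgd x) hδc (hcube_low w₁ hw₁ x) hip
            (norm_nonneg _) (norm_nonneg _)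
          simpa [real_inner_self_eq_norm_sq] using this
      _ = c * s ^ 2 / 2 * A + c / 2 * E := by
          rw [integral_add ((hInt w₁ u₂ u₂).const_mul _) ((hInt w₁ e e).const_mul _),
            integral_const_mul, integral_const_mul, hAdef, hEdef]
      _ = c / 2 * (A * s ^ 2 + E) := by ring
  have hEA : E ≤ c ^ 2 * A := aux_key hA0 hE0 hc0 hEs
  -- norm bound on e
  have heb : ‖e‖ ^ 2 ≤ K₁ * E := by
    have h1 := hDle w₁ hw₁ e
    have h2 := hnormle e
    rw [← hEdef] at h1
    calc ‖e‖ ^ 2 ≤ (1 + CP ^ 2) * ∫ x, ‖D e x‖ ^ 2 ∂μ := h2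
      _ ≤ (1 + CP ^ 2) * (8 / κ ^ 3 * E) := mul_le_mul_of_nonneg_left h1 (by positivity)
      _ = K₁ * E := by rw [hK₁def]; ring
  -- final chain
  have h8M : (0 : ℝ) < 8 * M ^ 3 / κ ^ 3 :=
    div_pos (by nlinarith [pow_pos hM 3]) hκ3
  have hfin : ‖e‖ ^ 2 ≤ C2 * (‖v‖ * ‖w₁ - w₂‖) ^ 2 := by
    have h1 : E ≤ c ^ 2 * (8 * M ^ 3 / κ ^ 3 * Q) :=
      hEA.trans (mul_le_mul_of_nonneg_left hAb (sq_nonneg c))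
    have h2 : E ≤ c ^ 2 * (8 * M ^ 3 / κ ^ 3 * (K₁ * ‖v‖ ^ 2)) :=
      h1.trans (mul_le_mul_of_nonneg_left
        (mul_le_mul_of_nonneg_left hQb h8M.le) (sq_nonneg c))
    have h3 : ‖e‖ ^ 2 ≤ K₁ * (c ^ 2 * (8 * M ^ 3 / κ ^ 3 * (K₁ * ‖v‖ ^ 2))) :=
      heb.trans (mul_le_mul_of_nonneg_left h2 hK₁.le)
    calc ‖e‖ ^ 2 ≤ K₁ * (c ^ 2 * (8 * M ^ 3 / κ ^ 3 * (K₁ * ‖v‖ ^ 2))) := h3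
      _ = C2 * (‖v‖ * ‖w₁ - w₂‖) ^ 2 := by rw [hC2def, hcdef]; ring
  have hgoal : ‖e‖ ≤ Real.sqrt C2 * (‖v‖ * ‖w₁ - w₂‖) := by
    have hB : (0 : ℝ) ≤ Real.sqrt C2 * (‖v‖ * ‖w₁ - w₂‖) := by positivity
    refine aux_sqrt_le (norm_nonneg _) hB ?_
    calc ‖e‖ ^ 2 ≤ C2 * (‖v‖ * ‖w₁ - w₂‖) ^ 2 := hfin
      _ = (Real.sqrt C2 * (‖v‖ * ‖w₁ - w₂‖)) ^ 2 := by
          rw [mul_pow (Real.sqrt C2) (‖v‖ * ‖w₁ - w₂‖), Real.sq_sqrt hC2.le]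
  calc ‖e‖ ≤ Real.sqrt C2 * (‖v‖ * ‖w₁ - w₂‖) := hgoal
    _ = Real.sqrt C2 * ‖v‖ * ‖w₁ - w₂‖ := by ring
end

section
/- The Fréchet derivative of the Nemytskii map G(w̃) = −β_F/(w̃+θ₂)² + β_p(θ₁−1) at w̃ ∈ B_r(w̃₀, T) acting on q is G′(w̃)q = 2β_F q/(w̃+θ₂)³, and it satisfies the uniform bound sup_{t∈[0,T]} ‖[G′(w̃)q](t)‖_{H²(Ω)} ≤ L_G sup_{t∈[0,T]} ‖q(t)‖_{H²(Ω)}. -/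
/-- The Fréchet derivative of the Nemytskii map `G(w̃) = −β_F/(w̃+θ₂)² + β_p(θ₁−1)` at
`w̃ ∈ B_r(w̃₀, T)` acting on `q` is `G′(w̃)q = 2β_F q/(w̃+θ₂)³`, and it satisfies the
uniform bound `sup_{t∈[0,T]} ‖[G′(w̃)q](t)‖_{H²} ≤ L_G sup_{t∈[0,T]} ‖q(t)‖_{H²}` with
`L_G = β_F C₂ = 2β_F C₁³`.  `H` models the algebra `H²(Ω)`; `C₁` uniformly bounds
`‖(w̃+θ₂)⁻¹‖_{H²}` on the ball. -/
theorem stmt9 {H : Type*} [NormedCommRing H] [NormedAlgebra ℝ H] [CompleteSpace H]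
    (β_F θ₂ C₁ r T : ℝ) (hβF : 0 < β_F) (hθ₂ : 0 < θ₂) (hT : 0 < T) (hr : 0 < r)
    (wt₀ : H)
    (hC₁ : ∀ u : H, ‖u - wt₀‖ ≤ r → IsUnit (u + algebraMap ℝ H θ₂) ∧
      ‖Ring.inverse (u + algebraMap ℝ H θ₂)‖ ≤ C₁)
    (wt : ℝ → H) (hball : ∀ t ∈ Set.Icc (0:ℝ) T, ‖wt t - wt₀‖ ≤ r)
    (β_p θ₁ : ℝ) :
    ∀ t ∈ Set.Icc (0:ℝ) T,
      HasFDerivAt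
        (fun u : H => -(β_F • (Ring.inverse (u + algebraMap ℝ H θ₂)) ^ 2)
          + algebraMap ℝ H (β_p * (θ₁ - 1)))
        ((2 * β_F) •
          (ContinuousLinearMap.mul ℝ H
            ((Ring.inverse (wt t + algebraMap ℝ H θ₂)) ^ 3))) (wt t) ∧
      ∀ q : H, ‖(2 * β_F) • ((Ring.inverse (wt t + algebraMap ℝ H θ₂)) ^ 3 * q)‖
        ≤ β_F * (2 * C₁ ^ 3) * ‖q‖ := by
  intro t ht
  obtain ⟨hu, hnorm⟩ := hC₁ (wt t) (hball t ht)
  obtain ⟨x, hx⟩ := hu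
  set c := algebraMap ℝ H θ₂
  set i := Ring.inverse (wt t + c) with hi
  have hix : i = (↑x⁻¹ : H) := by rw [hi, ← hx, Ring.inverse_unit]
  constructor
  · -- derivative
    have h0 : HasFDerivAt (fun u : H => u + c) (ContinuousLinearMap.id ℝ H) (wt t) := by
      simpa using (hasFDerivAt_id (wt t)).add_const c
    have hinv : HasFDerivAt Ring.inverse
        (-ContinuousLinearMap.mulLeftRight ℝ H (↑x⁻¹) (↑x⁻¹)) (wt t + c) :=
      hx ▸ hasFDerivAt_ringInverse (𝕜 := ℝ) x
    have h1 : HasFDerivAt (fun u : H => Ring.inverse (u + c))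
        (-ContinuousLinearMap.mulLeftRight ℝ H (↑x⁻¹) (↑x⁻¹)) (wt t) := by
      exact hinv.comp (wt t) h0
    have h2 := h1.mul h1
    have h3 := ((h2.const_smul β_F).neg).add_const (algebraMap ℝ H (β_p * (θ₁ - 1)))
    have hfun : (fun u : H => -(β_F • (Ring.inverse (u + c)) ^ 2)
          + algebraMap ℝ H (β_p * (θ₁ - 1)))
        = (fun u : H => -(β_F • (Ring.inverse (u + c) * Ring.inverse (u + c)))
          + algebraMap ℝ H (β_p * (θ₁ - 1))) := by
      funext u; rw [sq]
    have hD : ((2 * β_F) • ContinuousLinearMap.mul ℝ H (i ^ 3))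
        = -(β_F • (Ring.inverse (wt t + c) •
            (-ContinuousLinearMap.mulLeftRight ℝ H (↑x⁻¹) (↑x⁻¹))
          + Ring.inverse (wt t + c) •
            (-ContinuousLinearMap.mulLeftRight ℝ H (↑x⁻¹) (↑x⁻¹)))) := by
      ext z
      simp only [ContinuousLinearMap.smul_apply, ContinuousLinearMap.neg_apply,
        ContinuousLinearMap.add_apply, ContinuousLinearMap.mul_apply',
        ContinuousLinearMap.mulLeftRight_apply, smul_eq_mul, ← hix, ← hi]
      rw [mul_comm (2:ℝ) β_F, mul_smul, ← smul_neg]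
      congr 1
      rw [two_smul]
      ring
    rw [hfun, hD]
    exact h3
  · -- bound
    intro q
    have hC₁0 : 0 ≤ C₁ := le_trans (norm_nonneg _) hnorm
    have h1 : ‖i ^ 3 * q‖ ≤ ‖i‖ ^ 3 * ‖q‖ := by
      calc ‖i ^ 3 * q‖ ≤ ‖i ^ 3‖ * ‖q‖ := norm_mul_le _ _
        _ ≤ ‖i‖ ^ 3 * ‖q‖ := by
            gcongr
            exact norm_pow_le' i (by norm_num)
    have h2 : ‖i‖ ^ 3 ≤ C₁ ^ 3 := by gcongr
    calc ‖(2 * β_F) • (i ^ 3 * q)‖ = (2 * β_F) * ‖i ^ 3 * q‖ := by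
          rw [norm_smul, Real.norm_of_nonneg (by positivity)]
      _ ≤ (2 * β_F) * (C₁ ^ 3 * ‖q‖) := by
          apply mul_le_mul_of_nonneg_left _ (by positivity)
          exact h1.trans (by gcongr)
      _ = β_F * (2 * C₁ ^ 3) * ‖q‖ := by ring
end
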